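/- arXiv:1711.04881 — 3 statements merged into one kernel-verified Lean document; each statement's English description precedes it below -/
import Mathlib

section
/- Let G be a finite connected simple graph on n vertices equipped with an edge-weight function w assigning to each edge an integer weight in {1,…,W}. For each t ∈ {1,…,W−1}, let G^(t) be the spanning subgraph of G containing exactly those edges of weight at most t, and let c(t) be the number of connected components of G^(t). Then the minimum total weight M over all spanning trees of G satisfies M = n − W + Σ_{t=1}^{W−1} c(t). -/
open SimpleGraph Finset

/-- The threshold graph `G^(t)`: the spanning subgraph of `G` containing exactly
the edges of weight at most `t`. -/
def thresholdGraph {V : Type*} (G : SimpleGraph V) (w : Sym2 V → ℕ) (t : ℕ) :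
    SimpleGraph V where
  Adj u v := G.Adj u v ∧ w s(u, v) ≤ t
  symm := by
    constructor
    intro u v h
    exact ⟨h.1.symm, by rw [Sym2.eq_swap]; exact h.2⟩
  loopless := ⟨fun v h => G.loopless.1 v h.1⟩

namespace MstAux


variable {V : Type*}

lemma reach_trans {H H' : SimpleGraph V}
    (h : ∀ x y, H.Adj x y → H'.Reachable x y) {x y : V} (hr : H.Reachable x y) :
    H'.Reachable x y := by
  obtain ⟨p⟩ := hr
  induction p with
  | nil => exact Reachable.refl _
  | cons ha _ ih => exact (h _ _ ha).trans ih

lemma sdiff_single_adj {H : SimpleGraph V} {f : Sym2 V} {x y : V} (h : H.Adj x y)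
    (hne : s(x, y) ≠ f) : (H \ fromEdgeSet {f}).Adj x y := by
  rw [sdiff_adj]
  exact ⟨h, fun hc => hne (by simpa using ((fromEdgeSet_adj _).mp hc).1)⟩

lemma reachable_of_not_mem_edges {H : SimpleGraph V} {f : Sym2 V} {u v : V}
    (p : H.Walk u v) : f ∉ p.edges → (H \ fromEdgeSet {f}).Reachable u v := by
  induction p with
  | nil => exact fun _ => Reachable.refl _
  | cons ha q ih =>
    intro hf
    rw [Walk.edges_cons, List.mem_cons] at hf
    push_neg at hf
    exact (sdiff_single_adj ha (fun hc => hf.1 hc.symm)).reachable.trans (ih hf.2)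

lemma exists_split {H : SimpleGraph V} {u v : V}
    (p : H.Walk u v) : ∀ f : Sym2 V, p.IsPath → f ∈ p.edges →
    ∃ a b, f = s(a, b) ∧ (H \ fromEdgeSet {f}).Reachable u a ∧
      (H \ fromEdgeSet {f}).Reachable b v := by
  induction p with
  | nil => intro f _ hf; simp at hf
  | @cons u x v ha q ih =>
    intro f hp hf
    rw [Walk.edges_cons, List.mem_cons] at hf
    have hnodup := hp.edges_nodup
    rw [Walk.edges_cons] at hnodup
    rcases hf with rfl | hf
    · exact ⟨u, x, rfl, Reachable.refl _,
        reachable_of_not_mem_edges q (List.nodup_cons.mp hnodup).1⟩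
    · obtain ⟨a, b, rfl, h1, h2⟩ := ih f hp.of_cons hf
      have hne : s(u, x) ≠ s(a, b) := fun hc =>
        (List.nodup_cons.mp hnodup).1 (by rw [hc]; exact hf)
      exact ⟨a, b, rfl, (sdiff_single_adj ha hne).reachable.trans h1, h2⟩

lemma acyclic_mono {F H : SimpleGraph V} (hle : F ≤ H) (h : H.IsAcyclic) : F.IsAcyclic :=
  fun _ c hc => h (c.mapLe hle) (hc.mapLe hle)

lemma connected_of_adj_reach {H H' : SimpleGraph V} (hc : H.Connected)
    (h : ∀ x y, H.Adj x y → H'.Reachable x y) : H'.Connected := by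
  haveI := hc.nonempty
  exact Connected.mk (fun x y => reach_trans h (hc.preconnected x y))

lemma exists_tree_le [Finite V] {H : SimpleGraph V} (hH : H.Connected) :
    ∃ T, T ≤ H ∧ T.IsTree := by
  classical
  suffices h : ∀ (n : ℕ) (H : SimpleGraph V), H.Connected → H.edgeSet.ncard = n →
      ∃ T, T ≤ H ∧ T.IsTree from h _ H hH rfl
  intro n
  induction n using Nat.strong_induction_on with
  | _ n ih =>
    intro H hH hn
    by_cases hac : H.IsAcyclic
    · exact ⟨H, le_refl H, ⟨hH, hac⟩⟩
    · rw [isAcyclic_iff_forall_edge_isBridge] at hac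
      push_neg at hac
      obtain ⟨e, he, hbr⟩ := hac
      revert he hbr
      refine Sym2.ind (fun a b => ?_) e
      intro he hbr
      rw [isBridge_iff] at hbr
      have hadj : H.Adj a b := (mem_edgeSet H).mp he
      push_neg at hbr
      have hreach : (H \ fromEdgeSet {s(a, b)}).Reachable a b := hbr
      have hconn : (H \ fromEdgeSet {s(a, b)}).Connected :=
        connected_of_adj_reach hH (fun x y hxy => by
          by_cases hxe : s(x, y) = s(a, b)
          · rcases Sym2.eq_iff.mp hxe with ⟨rfl, rfl⟩ | ⟨rfl, rfl⟩
            · exact hreach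
            · exact hreach.symm
          · exact (sdiff_single_adj hxy hxe).reachable)
      have hedge : (H \ fromEdgeSet {s(a, b)}).edgeSet = H.edgeSet \ {s(a, b)} := by
        rw [edgeSet_sdiff, edgeSet_fromEdgeSet, edgeSet_sdiff_sdiff_isDiag]
      have hlt : (H \ fromEdgeSet {s(a, b)}).edgeSet.ncard < n := by
        rw [hedge, ← hn]
        exact Set.ncard_diff_singleton_lt_of_mem he (H.edgeSet.toFinite)
      obtain ⟨T, hT1, hT2⟩ := ih _ hlt _ hconn rfl
      exact ⟨T, hT1.trans sdiff_le, hT2⟩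


lemma card_cc_delete [Finite V] {F : SimpleGraph V} {a b : V} (hab : F.Adj a b)
    (hbr : ¬(F \ fromEdgeSet {s(a, b)}).Reachable a b) :
    Nat.card (F \ fromEdgeSet {s(a, b)}).ConnectedComponent =
      Nat.card F.ConnectedComponent + 1 := by
  classical
  set F' := F \ fromEdgeSet {s(a, b)} with hF'
  have hle : F' ≤ F := sdiff_le
  have key : ∀ x y : V, F.Reachable x y → F'.Reachable x y ∨
      ((F'.Reachable x a ∨ F'.Reachable x b) ∧ (F'.Reachable y a ∨ F'.Reachable y b)) := by
    intro x y hr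
    obtain ⟨p⟩ := hr
    induction p with
    | nil => exact Or.inl (Reachable.refl _)
    | @cons x z y hxz q ih =>
      by_cases hxe : s(x, z) = s(a, b)
      · have hx : F'.Reachable x a ∨ F'.Reachable x b := by
          rcases Sym2.eq_iff.mp hxe with ⟨rfl, rfl⟩ | ⟨rfl, rfl⟩
          · exact Or.inl (Reachable.refl _)
          · exact Or.inr (Reachable.refl _)
        have hz : F'.Reachable z a ∨ F'.Reachable z b := by
          rcases Sym2.eq_iff.mp hxe with ⟨rfl, rfl⟩ | ⟨rfl, rfl⟩
          · exact Or.inr (Reachable.refl _)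
          · exact Or.inl (Reachable.refl _)
        refine Or.inr ⟨hx, ?_⟩
        rcases ih with h | ⟨_, hy⟩
        · rcases hz with h' | h'
          · exact Or.inl (h.symm.trans h')
          · exact Or.inr (h.symm.trans h')
        · exact hy
      · have hadj : F'.Adj x z := sdiff_single_adj hxz hxe
        rcases ih with h | ⟨hz, hy⟩
        · exact Or.inl (hadj.reachable.trans h)
        · refine Or.inr ⟨?_, hy⟩
          rcases hz with h' | h'
          · exact Or.inl (hadj.reachable.trans h')
          · exact Or.inr (hadj.reachable.trans h')
  set q : F'.ConnectedComponent → F.ConnectedComponent :=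
    ConnectedComponent.map (Hom.ofLE hle) with hq
  have hq_mk : ∀ v : V, q (F'.connectedComponentMk v) = F.connectedComponentMk v :=
    fun v => rfl
  have hmkb_ne : F'.connectedComponentMk a ≠ F'.connectedComponentMk b := by
    simp only [Ne, ConnectedComponent.eq]; exact hbr
  have hinj : ∀ c d : F'.ConnectedComponent, q c = q d → c ≠ F'.connectedComponentMk b →
      d ≠ F'.connectedComponentMk b → c = d := by
    refine ConnectedComponent.ind₂ (fun x y hxy hcx hcy => ?_)
    rw [hq_mk, hq_mk, ConnectedComponent.eq] at hxy
    rcases key x y hxy with h | ⟨h1, h2⟩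
    · exact ConnectedComponent.sound h
    · have hx : F'.Reachable x a := by
        rcases h1 with h | h
        · exact h
        · exact absurd (ConnectedComponent.sound h) hcx
      have hy : F'.Reachable y a := by
        rcases h2 with h | h
        · exact h
        · exact absurd (ConnectedComponent.sound h) hcy
      exact ConnectedComponent.sound (hx.trans hy.symm)
  let h : F'.ConnectedComponent → F.ConnectedComponent ⊕ Unit := fun c =>
    if c = F'.connectedComponentMk b then Sum.inr () else Sum.inl (q c)
  have hbij : Function.Bijective h := by
    constructor
    · intro c d hcd
      by_cases hc : c = F'.connectedComponentMk b <;>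
        by_cases hd : d = F'.connectedComponentMk b
      · rw [hc, hd]
      · simp [h, hc, hd] at hcd
      · simp [h, hc, hd] at hcd
      · simp only [h, if_neg hc, if_neg hd, Sum.inl.injEq] at hcd
        exact hinj c d hcd hc hd
    · rintro (d | ⟨⟩)
      · refine ConnectedComponent.ind (fun v => ?_) d
        by_cases hv : F.connectedComponentMk v = F.connectedComponentMk a
        · exact ⟨F'.connectedComponentMk a, by
            simp only [h, if_neg hmkb_ne]
            rw [hq_mk, hv]⟩
        · refine ⟨F'.connectedComponentMk v, ?_⟩
          have hne : F'.connectedComponentMk v ≠ F'.connectedComponentMk b := by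
            intro hc
            apply hv
            have hvb : F.Reachable v b := (ConnectedComponent.eq.mp hc).mono hle
            exact ConnectedComponent.sound (hvb.trans hab.symm.reachable)
          simp only [h, if_neg hne]
          rw [hq_mk]
      · exact ⟨F'.connectedComponentMk b, by simp [h]⟩
  rw [Nat.card_eq_of_bijective h hbij, Nat.card_sum]
  simp

lemma forest_card [Fintype V] {F : SimpleGraph V} (hF : F.IsAcyclic) :
    F.edgeSet.ncard + Nat.card F.ConnectedComponent = Fintype.card V := by
  classical
  suffices h : ∀ (n : ℕ) (F : SimpleGraph V), F.IsAcyclic → F.edgeSet.ncard = n →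
      F.edgeSet.ncard + Nat.card F.ConnectedComponent = Fintype.card V from h _ F hF rfl
  intro n
  induction n using Nat.strong_induction_on with
  | _ n ih =>
    intro F hF hn
    rcases eq_or_ne n 0 with rfl | hn0
    · have hbot : F = ⊥ := by
        rw [← edgeSet_eq_empty]
        exact (Set.ncard_eq_zero (F.edgeSet.toFinite)).mp hn
      subst hbot
      have hbij : Function.Bijective ((⊥ : SimpleGraph V).connectedComponentMk) := by
        constructor
        · intro x y hxy
          exact reachable_bot.mp (ConnectedComponent.eq.mp hxy)
        · exact ConnectedComponent.ind (fun v => ⟨v, rfl⟩)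
      rw [hn, ← Nat.card_eq_of_bijective _ hbij, Nat.card_eq_fintype_card]
      omega
    · obtain ⟨e, he⟩ : F.edgeSet.Nonempty := by
        rw [Set.nonempty_iff_ne_empty]
        intro hc
        exact hn0 (by rw [← hn, hc, Set.ncard_empty])
      revert he
      refine Sym2.ind (fun a b => ?_) e
      intro he
      have hadj : F.Adj a b := (mem_edgeSet F).mp he
      have hbr : ¬(F \ fromEdgeSet {s(a, b)}).Reachable a b := by
        have hb := (isAcyclic_iff_forall_adj_isBridge.mp hF) hadj
        rw [isBridge_iff] at hb
        exact hb
      have hedge : (F \ fromEdgeSet {s(a, b)}).edgeSet = F.edgeSet \ {s(a, b)} := by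
        rw [edgeSet_sdiff, edgeSet_fromEdgeSet, edgeSet_sdiff_sdiff_isDiag]
      have hcard : (F \ fromEdgeSet {s(a, b)}).edgeSet.ncard = n - 1 := by
        rw [hedge, Set.ncard_diff_singleton_of_mem he, hn]
      have hlt : (F \ fromEdgeSet {s(a, b)}).edgeSet.ncard < n := by omega
      have hrec := ih _ hlt _ (acyclic_mono sdiff_le hF) rfl
      rw [card_cc_delete hadj hbr, hcard] at hrec
      rw [hn]
      omega


lemma threshold_mem_edgeSet {H : SimpleGraph V} {w : Sym2 V → ℕ} {t : ℕ} {e : Sym2 V} :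
    e ∈ (thresholdGraph H w t).edgeSet ↔ e ∈ H.edgeSet ∧ w e ≤ t := by
  refine Sym2.ind (fun x y => ?_) e
  rw [mem_edgeSet, mem_edgeSet]
  exact Iff.rfl

end MstAux

open MstAux

/-- For a finite connected simple graph `G` on `n` vertices with integer
edge weights in `{1, …, W}`, the minimum weight `M` of a spanning tree of `G` satisfies
`M = n - W + ∑_{t=1}^{W-1} c(t)`, where `c(t)` is the number of connected components of
the threshold graph `G^(t)`. -/
theorem mst_formula {V : Type*} [Fintype V] (G : SimpleGraph V) (hG : G.Connected)
    (W : ℕ) (hW : 1 ≤ W) (w : Sym2 V → ℕ)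
    (hw : ∀ e ∈ G.edgeSet, 1 ≤ w e ∧ w e ≤ W)
    (M : ℕ)
    (hM : IsLeast
      {x : ℕ | ∃ T : SimpleGraph V, T ≤ G ∧ T.IsTree ∧
        x = ∑ e ∈ T.edgeSet.toFinite.toFinset, w e} M) :
    (M : ℤ) = (Fintype.card V : ℤ) - (W : ℤ) +
      ∑ t ∈ Finset.Icc 1 (W - 1),
        (Nat.card (thresholdGraph G w t).ConnectedComponent : ℤ) := by
  classical
  obtain ⟨T, hTG, hTree, hMw⟩ := hM.1
  set B := T.edgeSet.toFinite.toFinset with hB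
  have hmemB : ∀ e, e ∈ B ↔ e ∈ T.edgeSet := fun e => Set.Finite.mem_toFinset _
  have hwB : ∀ e ∈ B, 1 ≤ w e ∧ w e ≤ W := fun e he =>
    hw e (edgeSet_mono hTG ((hmemB e).mp he))
  -- tree has card V - 1 edges
  have hcc1 : Nat.card T.ConnectedComponent = 1 := by
    rw [Nat.card_eq_one_iff_unique]
    constructor
    · constructor
      intro c d
      refine ConnectedComponent.ind₂ (fun x y => ?_) c d
      exact ConnectedComponent.sound (hTree.isConnected.preconnected x y)
    · have := hTree.isConnected.nonempty
      exact Nonempty.map T.connectedComponentMk this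
  have hnB : B.card + 1 = Fintype.card V := by
    have hfc := forest_card hTree.IsAcyclic
    rw [hcc1] at hfc
    have : T.edgeSet.ncard = B.card := Set.ncard_eq_toFinset_card _ _
    omega
  -- key exchange property
  have key1 : ∀ (t : ℕ) (x y : V), (thresholdGraph G w t).Adj x y →
      (thresholdGraph T w t).Reachable x y := by
    intro t x y hxy
    by_contra hnreach
    obtain ⟨hGxy, hwxy⟩ := hxy
    obtain ⟨p0⟩ := hTree.isConnected.preconnected x y
    set p := p0.bypass with hp0
    have hp : p.IsPath := p0.bypass_isPath
    have hheavy : ∃ f ∈ p.edges, t < w f := by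
      by_contra hc
      push_neg at hc
      refine hnreach ⟨p.transfer (thresholdGraph T w t) ?_⟩
      intro e hem
      exact threshold_mem_edgeSet.mpr ⟨p.edges_subset_edgeSet hem, hc e hem⟩
    obtain ⟨f, hfp, hwf⟩ := hheavy
    obtain ⟨a0, b0, rfl, hra, hrb⟩ := exists_split p f hp hfp
    have hfT : s(a0, b0) ∈ B := (hmemB _).mpr (p.edges_subset_edgeSet hfp)
    have hxyne : x ≠ y := hGxy.ne
    have hxyT : s(x, y) ∉ T.edgeSet := by
      intro hc
      exact hnreach (Adj.reachable
        (⟨(mem_edgeSet T).mp hc, hwxy⟩ : (thresholdGraph T w t).Adj x y))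
    set T' := (T \ fromEdgeSet {s(a0, b0)}) ⊔ edge x y with hT'
    have hT'G : T' ≤ G := by
      refine sup_le (le_trans sdiff_le hTG) ?_
      intro u v huv
      rw [edge_adj] at huv
      rcases huv.1 with ⟨rfl, rfl⟩ | ⟨rfl, rfl⟩
      · exact hGxy
      · exact hGxy.symm
    have hT'conn : T'.Connected := by
      refine connected_of_adj_reach hTree.isConnected (fun u v huv => ?_)
      by_cases hne : s(u, v) = s(a0, b0)
      · have hxyadj : T'.Adj x y := by
          apply le_sup_right (b := edge x y)
          rw [edge_adj]
          exact ⟨Or.inl ⟨rfl, rfl⟩, hxyne⟩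
        have hab : T'.Reachable a0 b0 :=
          ((hra.mono le_sup_left).symm.trans hxyadj.reachable).trans
            (hrb.mono le_sup_left).symm
        rcases Sym2.eq_iff.mp hne with ⟨rfl, rfl⟩ | ⟨rfl, rfl⟩
        · exact hab
        · exact hab.symm
      · exact ((sdiff_single_adj huv hne).reachable).mono le_sup_left
    obtain ⟨T'', hT''le, hT''tree⟩ := exists_tree_le hT'conn
    have hMle : M ≤ ∑ e ∈ T''.edgeSet.toFinite.toFinset, w e :=
      hM.2 ⟨T'', hT''le.trans hT'G, hT''tree, rfl⟩
    have hT'edge : T'.edgeSet = (T.edgeSet \ {s(a0, b0)}) ∪ {s(x, y)} := by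
      rw [hT', edgeSet_sup, edgeSet_sdiff, edgeSet_fromEdgeSet,
        edgeSet_sdiff_sdiff_isDiag, edge, edgeSet_fromEdgeSet]
      congr 1
      ext e
      simp only [Set.mem_diff, Set.mem_singleton_iff, Set.mem_setOf_eq,
        and_iff_left_iff_imp]
      rintro rfl
      simp [hxyne]
    have hfin : T'.edgeSet.toFinite.toFinset = insert s(x, y) (B.erase s(a0, b0)) := by
      ext e
      simp only [Set.Finite.mem_toFinset, hT'edge, Set.mem_union, Set.mem_diff,
        Set.mem_singleton_iff, Finset.mem_insert, Finset.mem_erase, hmemB]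
      tauto
    have hnotin : s(x, y) ∉ B.erase s(a0, b0) := by
      intro hc
      exact hxyT ((hmemB _).mp (Finset.mem_of_mem_erase hc))
    have hsum1 : ∑ e ∈ T'.edgeSet.toFinite.toFinset, w e
        = w s(x, y) + ∑ e ∈ B.erase s(a0, b0), w e := by
      rw [hfin, Finset.sum_insert hnotin]
    have hsum2 : w s(a0, b0) + ∑ e ∈ B.erase s(a0, b0), w e = ∑ e ∈ B, w e :=
      Finset.add_sum_erase B w hfT
    have hsub : T''.edgeSet.toFinite.toFinset ⊆ T'.edgeSet.toFinite.toFinset := by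
      rw [Set.Finite.toFinset_subset_toFinset]
      exact edgeSet_mono hT''le
    have hsum3 : ∑ e ∈ T''.edgeSet.toFinite.toFinset, w e
        ≤ ∑ e ∈ T'.edgeSet.toFinite.toFinset, w e :=
      Finset.sum_le_sum_of_subset hsub
    rw [hMw] at hMle
    omega
  -- component counts agree
  have key2 : ∀ t : ℕ, Nat.card (thresholdGraph G w t).ConnectedComponent =
      Nat.card (thresholdGraph T w t).ConnectedComponent := by
    intro t
    have hle : thresholdGraph T w t ≤ thresholdGraph G w t := by
      intro x y h
      exact ⟨hTG h.1, h.2⟩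
    refine (Nat.card_eq_of_bijective
      (ConnectedComponent.map (Hom.ofLE hle)) ⟨?_, ?_⟩).symm
    · refine ConnectedComponent.ind₂ (fun x y hxy => ?_)
      have hre : (thresholdGraph G w t).Reachable x y := by
        rw [ConnectedComponent.map_mk, ConnectedComponent.map_mk] at hxy
        exact ConnectedComponent.eq.mp hxy
      exact ConnectedComponent.sound (reach_trans (key1 t) hre)
    · refine ConnectedComponent.ind (fun v =>
        ⟨(thresholdGraph T w t).connectedComponentMk v, rfl⟩)
  -- counting edges below threshold
  have key3 : ∀ t : ℕ, (B.filter (fun e => w e ≤ t)).card +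
      Nat.card (thresholdGraph G w t).ConnectedComponent = Fintype.card V := by
    intro t
    rw [key2 t]
    have hacyc : (thresholdGraph T w t).IsAcyclic :=
      acyclic_mono (fun x y h => h.1) hTree.IsAcyclic
    have hfc := forest_card hacyc
    have hset : (thresholdGraph T w t).edgeSet = ↑(B.filter fun e => w e ≤ t) := by
      ext e
      simp only [threshold_mem_edgeSet, Finset.coe_filter, Set.mem_setOf_eq, hmemB]
    rw [hset, Set.ncard_coe_finset] at hfc
    exact hfc
  -- the double counting identity
  have hM1 : M = ∑ t ∈ Icc 1 W, (B.filter fun e => t ≤ w e).card := by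
    rw [hMw]
    have hwe : ∀ e ∈ B, w e = ∑ t ∈ Icc 1 W, if t ≤ w e then 1 else 0 := by
      intro e he
      calc w e = (Icc 1 (w e)).card := by rw [Nat.card_Icc]; omega
        _ = ((Icc 1 W).filter (fun t => t ≤ w e)).card := by
            congr 1
            ext z
            simp only [Finset.mem_Icc, Finset.mem_filter]
            have := hwB e he
            omega
        _ = ∑ t ∈ Icc 1 W, if t ≤ w e then 1 else 0 := Finset.card_filter _ _
    rw [Finset.sum_congr rfl hwe, Finset.sum_comm]
    exact Finset.sum_congr rfl fun t _ => (Finset.card_filter _ _).symm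
  have hsplit : Icc 1 W = insert 1 (Icc 2 W) := by
    ext z
    simp only [Finset.mem_Icc, Finset.mem_insert]
    omega
  have h1notin : (1 : ℕ) ∉ Icc 2 W := by simp
  have hg1 : (B.filter fun e => 1 ≤ w e).card = B.card := by
    rw [Finset.filter_true_of_mem fun e he => (hwB e he).1]
  have hIcc2 : ∑ t ∈ Icc 2 W, (B.filter fun e => t ≤ w e).card
      = ∑ t ∈ Icc 1 (W - 1), (B.filter fun e => t + 1 ≤ w e).card := by
    have hmap : Icc 2 W = (Icc 1 (W - 1)).map (addRightEmbedding 1) := by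
      rw [Finset.map_add_right_Icc]
      congr 1
      omega
    rw [hmap, Finset.sum_map]
    simp [addRightEmbedding_apply]
  have hper : ∀ t ∈ Icc 1 (W - 1), (B.filter fun e => t + 1 ≤ w e).card + 1
      = Nat.card (thresholdGraph G w t).ConnectedComponent := by
    intro t _
    have h3 := key3 t
    have hpart := Finset.card_filter_add_card_filter_not
      (s := B) (p := fun e => w e ≤ t)
    have hfeq : B.filter (fun e => ¬ w e ≤ t) = B.filter (fun e => t + 1 ≤ w e) := by
      apply Finset.filter_congr
      intro e _
      constructor <;> intro h <;> omega
    rw [hfeq] at hpart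
    omega
  have hcardIcc : (Icc 1 (W - 1)).card = W - 1 := by
    rw [Nat.card_Icc]
    omega
  have hsum : M + (W - 1) = B.card + ∑ t ∈ Icc 1 (W - 1),
      Nat.card (thresholdGraph G w t).ConnectedComponent := by
    rw [hM1, hsplit, Finset.sum_insert h1notin, hg1, hIcc2]
    have hms : ∑ t ∈ Icc 1 (W - 1), ((B.filter fun e => t + 1 ≤ w e).card + 1)
        = ∑ t ∈ Icc 1 (W - 1), Nat.card (thresholdGraph G w t).ConnectedComponent :=
      Finset.sum_congr rfl hper
    rw [Finset.sum_add_distrib, Finset.sum_const, smul_eq_mul, mul_one, hcardIcc] at hms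
    omega
  have hzn : ((M : ℤ) + ((W : ℤ) - 1)) = (B.card : ℤ) +
      ∑ t ∈ Icc 1 (W - 1), (Nat.card (thresholdGraph G w t).ConnectedComponent : ℤ) := by
    have h := hsum
    zify [hW] at h
    push_cast at h ⊢
    linarith [h]
  have hn' : (B.card : ℤ) + 1 = (Fintype.card V : ℤ) := by exact_mod_cast hnB
  linarith [hzn, hn']
end

section
/- Let G be a finite simple graph with at most λ vertices and let v be a vertex of G. For every integer k ≥ 1, the number of subtrees of G with exactly k vertices that contain v is at most (k²λ)^{k−1}. -/
open SimpleGraph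

private lemma sym2_map_injOn {α β : Type*} {f : α → β} {s : Set α}
    (hf : Set.InjOn f s) {e₁ e₂ : Sym2 α}
    (h₁ : ∀ a ∈ e₁, a ∈ s) (h₂ : ∀ a ∈ e₂, a ∈ s)
    (h : Sym2.map f e₁ = Sym2.map f e₂) : e₁ = e₂ := by
  induction e₁ using Sym2.ind with
  | _ a b =>
    induction e₂ using Sym2.ind with
    | _ c d =>
      simp only [Sym2.map_pair_eq, Sym2.eq_iff] at h ⊢
      have ha := h₁ a (by simp)
      have hb := h₁ b (by simp)
      have hc := h₂ c (by simp)
      have hd := h₂ d (by simp)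
      rcases h with ⟨h1, h2⟩ | ⟨h1, h2⟩
      · exact Or.inl ⟨hf ha hc h1, hf hb hd h2⟩
      · exact Or.inr ⟨hf ha hd h1, hf hb hc h2⟩

/-- In a finite simple graph with at most `λ` vertices, for every
`k ≥ 1`, the number of subtrees with exactly `k` vertices containing a fixed vertex `v`
is at most `(k² λ)^{k-1}`. A subtree is a subgraph that is a tree (connected and
acyclic). -/
theorem count_subtrees_containing_vertex {V : Type*} [Fintype V] (G : SimpleGraph V)
    (lam : ℕ) (hlam : Fintype.card V ≤ lam) (v : V) (k : ℕ) (hk : 1 ≤ k) :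
    Nat.card {T : G.Subgraph //
        T.coe.IsTree ∧ T.verts.ncard = k ∧ v ∈ T.verts}
      ≤ (k ^ 2 * lam) ^ (k - 1) := by
  classical
  letI : LinearOrder V := LinearOrder.lift' (Fintype.equivFin V) (Fintype.equivFin V).injective
  have hk0 : 0 < k := hk
  set S := {T : G.Subgraph // T.coe.IsTree ∧ T.verts.ncard = k ∧ v ∈ T.verts} with hS
  -- vertex finset of a subtree, its sorted list, and the index function
  let vfin : S → Finset V := fun T => (Set.toFinite T.1.verts).toFinset
  have hvfin_card : ∀ T : S, (vfin T).card = k := fun T => by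
    rw [← Set.ncard_eq_toFinset_card]; exact T.2.2.1
  let lst : S → List V := fun T => (vfin T).sort (· ≤ ·)
  have hlen : ∀ T : S, (lst T).length = k := fun T => by
    rw [Finset.length_sort, hvfin_card]
  have hmem_lst : ∀ T : S, ∀ a, a ∈ T.1.verts → a ∈ lst T := fun T a ha => by
    rw [Finset.mem_sort, Set.Finite.mem_toFinset]; exact ha
  let idx : S → V → Fin k := fun T a =>
    if h : a ∈ lst T then ⟨(lst T).idxOf a, (hlen T) ▸ List.idxOf_lt_length_iff.2 h⟩
    else ⟨0, hk0⟩
  have hidx_inj : ∀ T : S, Set.InjOn (idx T) T.1.verts := by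
    intro T a ha b hb hab
    have ha' := hmem_lst T a ha
    have hb' := hmem_lst T b hb
    simp only [idx, dif_pos ha', dif_pos hb', Fin.mk.injEq] at hab
    exact (List.idxOf_inj ha').1 hab
  -- edge finset of a subtree
  let efin : S → Finset (Sym2 V) := fun T => (Set.toFinite T.1.edgeSet).toFinset
  have hmem_efin : ∀ T : S, ∀ e, e ∈ efin T ↔ e ∈ T.1.edgeSet := fun T e =>
    Set.Finite.mem_toFinset _
  have hecard : ∀ T : S, (efin T).card = k - 1 := by
    intro T
    have hfin : Fintype T.1.verts := Set.Finite.fintype (Set.toFinite _)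
    have hcardv : Fintype.card T.1.verts = k := by
      rw [← Nat.card_eq_fintype_card, Nat.card_coe_set_eq]; exact T.2.2.1
    have h1 : T.1.coe.edgeFinset.card + 1 = k := by
      rw [T.2.1.card_edgeFinset, hcardv]
    have h2 : T.1.edgeSet.ncard = k - 1 := by
      rw [← SimpleGraph.Subgraph.image_coe_edgeSet_coe,
        Set.ncard_image_of_injective _ (Sym2.map.injective Subtype.val_injective)]
      have : T.1.coe.edgeSet.ncard = T.1.coe.edgeFinset.card := by
        rw [Set.ncard_eq_toFinset_card', SimpleGraph.edgeFinset]
      omega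
    rw [← Set.ncard_eq_toFinset_card]; exact h2
  have hedge_mem_verts : ∀ T : S, ∀ e ∈ efin T, ∀ a ∈ e, a ∈ T.1.verts := by
    intro T e he a hae
    exact SimpleGraph.Subgraph.mem_verts_of_mem_edge ((hmem_efin T e).1 he) hae
  -- the injection
  let Φ : S → {s : Finset V // s.card = k - 1} ×
      {s : Finset (Sym2 (Fin k)) // s.card = k - 1} := fun T =>
    ⟨⟨(vfin T).erase v, by
        rw [Finset.card_erase_of_mem (by
          rw [Set.Finite.mem_toFinset]; exact T.2.2.2), hvfin_card]⟩,
     ⟨(efin T).image (Sym2.map (idx T)), by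
        rw [Finset.card_image_of_injOn, hecard]
        intro e₁ he₁ e₂ he₂ h
        exact sym2_map_injOn (hidx_inj T) (hedge_mem_verts T e₁ he₁)
          (hedge_mem_verts T e₂ he₂) h⟩⟩
  have hΦ : Function.Injective Φ := by
    intro T₁ T₂ h
    have h1 : (vfin T₁).erase v = (vfin T₂).erase v := congrArg (Subtype.val ∘ Prod.fst) h
    have hv1 : v ∈ vfin T₁ := by rw [Set.Finite.mem_toFinset]; exact T₁.2.2.2
    have hv2 : v ∈ vfin T₂ := by rw [Set.Finite.mem_toFinset]; exact T₂.2.2.2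
    have hvfin : vfin T₁ = vfin T₂ := by
      rw [← Finset.insert_erase hv1, ← Finset.insert_erase hv2, h1]
    have hverts : T₁.1.verts = T₂.1.verts := by
      have := congrArg (fun s : Finset V => (s : Set V)) hvfin
      simpa only [vfin, Set.Finite.coe_toFinset] using this
    have hlst : lst T₁ = lst T₂ := by simp only [lst, hvfin]
    have hidx : idx T₁ = idx T₂ := by
      funext a
      simp only [idx, hlst]
    have h2 : (efin T₁).image (Sym2.map (idx T₁)) = (efin T₂).image (Sym2.map (idx T₂)) :=
      congrArg (Subtype.val ∘ Prod.snd) h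
    have hefin : efin T₁ = efin T₂ := by
      have key : ∀ (A B : S), vfin A = vfin B → idx A = idx B →
          (efin A).image (Sym2.map (idx A)) = (efin B).image (Sym2.map (idx B)) →
          efin A ⊆ efin B := by
        intro A B hAB hiAB him e he
        have : Sym2.map (idx A) e ∈ (efin B).image (Sym2.map (idx B)) := by
          rw [← him]; exact Finset.mem_image_of_mem _ he
        obtain ⟨e', he', heq⟩ := Finset.mem_image.1 this
        have hverts' : A.1.verts = B.1.verts := by
          have := congrArg (fun s : Finset V => (s : Set V)) hAB
          simpa only [vfin, Set.Finite.coe_toFinset] using this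
        have : e' = e := by
          refine sym2_map_injOn (hidx_inj A) ?_ (hedge_mem_verts A e he) ?_
          · intro a hae
            rw [hverts']
            exact hedge_mem_verts B e' he' a hae
          · simp only [hiAB] at heq ⊢; exact heq
        rwa [← this]
      exact Finset.Subset.antisymm (key T₁ T₂ hvfin hidx h2)
        (key T₂ T₁ hvfin.symm hidx.symm h2.symm)
    have hES : T₁.1.edgeSet = T₂.1.edgeSet := by
      ext e
      rw [← hmem_efin T₁ e, ← hmem_efin T₂ e, hefin]
    apply Subtype.ext
    apply SimpleGraph.Subgraph.ext hverts
    funext a b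
    apply propext
    rw [← SimpleGraph.Subgraph.mem_edgeSet, ← SimpleGraph.Subgraph.mem_edgeSet, hES]
  calc Nat.card S ≤ Nat.card ({s : Finset V // s.card = k - 1} ×
      {s : Finset (Sym2 (Fin k)) // s.card = k - 1}) :=
        Nat.card_le_card_of_injective Φ hΦ
    _ = (Fintype.card V).choose (k-1) * (Fintype.card (Sym2 (Fin k))).choose (k-1) := by
        rw [Nat.card_prod, Nat.card_eq_fintype_card, Nat.card_eq_fintype_card,
          Fintype.card_finset_len, Fintype.card_finset_len]
    _ ≤ lam ^ (k-1) * (k^2) ^ (k-1) := by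
        apply Nat.mul_le_mul
        · exact le_trans (Nat.choose_le_pow _ _) (Nat.pow_le_pow_left hlam _)
        · refine le_trans (Nat.choose_le_pow _ _) (Nat.pow_le_pow_left ?_ _)
          rw [Sym2.card, Fintype.card_fin, Nat.choose_two_right]
          have h1 : (k + 1) * k ≤ 2 * k ^ 2 := by nlinarith
          calc (k + 1) * (k + 1 - 1) / 2 = (k + 1) * k / 2 := by simp
            _ ≤ 2 * k ^ 2 / 2 := Nat.div_le_div_right h1
            _ = k ^ 2 := by omega
    _ = (k ^ 2 * lam) ^ (k - 1) := by rw [mul_pow, Nat.mul_comm]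
end

section
/- Let G be a finite simple graph, let v be a vertex of G, and let k ≥ 1 and b ≥ 1 be integers. Then the number of subtrees T of G with exactly k vertices that contain v and such that exactly b edges of G have exactly one endpoint in the vertex set of T is at most k^{2(k−1)} · (k−1+b)^{k(k−1)}. -/
open SimpleGraph

lemma exists_good_enum {V : Type*} {G : SimpleGraph V} (T : G.Subgraph)
    [Fintype T.verts] {m : ℕ} (hcard : Fintype.card T.verts = m + 1)
    (hconn : T.coe.Connected) {v : V} (hv : v ∈ T.verts) :
    ∃ f : Fin (m + 1) → V, Function.Injective f ∧ Set.range f = T.verts ∧ f 0 = v ∧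
      ∀ i : Fin (m + 1), i ≠ 0 → ∃ j, j < i ∧ T.Adj (f j) (f i) := by
  classical
  set N := m + 1 with hN
  set v₀ : T.verts := ⟨v, hv⟩ with hv₀
  set rank : T.verts → ℕ := fun u => ((Fintype.equivFin T.verts) u : ℕ) with hrankdef
  have hrank : ∀ u, rank u < N := fun u => hcard ▸ ((Fintype.equivFin T.verts) u).isLt
  set key : T.verts → ℕ := fun u => N * T.coe.dist v₀ u + rank u with hkeydef
  have keyinj : Function.Injective key := by
    intro a b hab
    have h1 : rank a = rank b := by
      have h2 := congrArg (· % N) hab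
      simpa [hkeydef, Nat.mul_add_mod, Nat.mod_eq_of_lt (hrank _)] using h2
    exact (Fintype.equivFin T.verts).injective (Fin.ext h1)
  haveI : Nonempty ↥T.verts := ⟨v₀⟩
  set s : Finset ℕ := Finset.univ.image key with hsdef
  have hs : s.card = N := by
    rw [hsdef, Finset.card_image_of_injective _ keyinj, Finset.card_univ, hcard]
  set ι := s.orderIsoOfFin hs with hιdef
  set g : ℕ → T.verts := Function.invFun key with hgdef
  have hg : ∀ u, g (key u) = u := Function.leftInverse_invFun keyinj
  set f' : Fin N → T.verts := fun i => g ((ι i : ℕ)) with hf'def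
  have hkeyf' : ∀ i, key (f' i) = (ι i : ℕ) := by
    intro i
    obtain ⟨u, -, hu⟩ := Finset.mem_image.mp (ι i).2
    rw [hf'def]; dsimp only; rw [← hu, hg, hu]
  have hmono : ∀ {i j : Fin N}, key (f' i) < key (f' j) ↔ i < j := by
    intro i j
    rw [hkeyf', hkeyf']
    exact ⟨fun h => (ι.lt_iff_lt).mp (Subtype.coe_lt_coe.mp h),
      fun h => Subtype.coe_lt_coe.mpr (ι.lt_iff_lt.mpr h)⟩
  have hf'inj : Function.Injective f' := by
    intro a b hab
    by_contra hne
    rcases lt_or_gt_of_ne hne with h | h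
    · exact absurd (hmono.mpr h) (by rw [hab]; exact lt_irrefl _)
    · exact absurd (hmono.mpr h) (by rw [hab]; exact lt_irrefl _)
  have hf'surj : Function.Surjective f' := by
    intro u
    have hmem : key u ∈ s := Finset.mem_image.mpr ⟨u, Finset.mem_univ _, rfl⟩
    obtain ⟨i, hi⟩ := ι.surjective ⟨key u, hmem⟩
    exact ⟨i, by rw [hf'def]; dsimp only; rw [hi, hg]⟩
  have hminv₀ : ∀ u : T.verts, u ≠ v₀ → key v₀ < key u := by
    intro u hu
    have h1 : key v₀ < N := by
      rw [hkeydef]; dsimp only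
      rw [SimpleGraph.dist_self, Nat.mul_zero, Nat.zero_add]
      exact hrank _
    have h2 : 0 < T.coe.dist v₀ u :=
      (hconn.preconnected v₀ u).pos_dist_of_ne (Ne.symm hu)
    have h3 : N ≤ key u := by
      rw [hkeydef]; dsimp only
      calc N = N * 1 := (Nat.mul_one N).symm
        _ ≤ N * T.coe.dist v₀ u := Nat.mul_le_mul_left N h2
        _ ≤ _ := Nat.le_add_right _ _
    omega
  have hf'0 : f' 0 = v₀ := by
    obtain ⟨i₀, hi₀⟩ := hf'surj v₀
    rcases eq_or_ne i₀ 0 with rfl | hne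
    · exact hi₀
    · exfalso
      have h0 : f' 0 ≠ v₀ := fun h => hne (hf'inj (h.trans hi₀.symm)).symm
      have h1 : key v₀ < key (f' 0) := hminv₀ _ h0
      have h2 : (0 : Fin N) < i₀ := Fin.pos_of_ne_zero hne
      have h3 : key (f' 0) < key (f' i₀) := hmono.mpr h2
      rw [hi₀] at h3; omega
  refine ⟨fun i => (f' i : V), Subtype.val_injective.comp hf'inj, ?_,
    by show ((f' 0 : V)) = v; rw [hf'0], ?_⟩
  · have hc : (fun i => ((f' i : V))) = Subtype.val ∘ f' := rfl
    rw [hc, Set.range_comp, Set.range_eq_univ.mpr hf'surj, Set.image_univ,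
      Subtype.range_coe]
  · intro i hi
    set u := f' i with hu
    have hune : u ≠ v₀ := fun h => hi (hf'inj (h.trans hf'0.symm))
    have hreach : T.coe.Reachable v₀ u := hconn.preconnected v₀ u
    set r := T.coe.dist v₀ u with hr
    have hrpos : 0 < r := hreach.pos_dist_of_ne (Ne.symm hune)
    obtain ⟨p, hp⟩ := hreach.exists_walk_length_eq_dist
    have hp' : p.reverse.length = r := by rw [SimpleGraph.Walk.length_reverse, hp]
    have hnn : ¬ p.reverse.Nil := SimpleGraph.Walk.not_nil_iff_lt_length.mpr (by omega)
    obtain ⟨w, huw, q, hq⟩ := SimpleGraph.Walk.not_nil_iff.mp hnn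
    have hql : q.length = r - 1 := by
      rw [hq, SimpleGraph.Walk.length_cons] at hp'; omega
    have hdw : T.coe.dist v₀ w < r := by
      calc T.coe.dist v₀ w = T.coe.dist w v₀ := SimpleGraph.dist_comm
        _ ≤ q.length := SimpleGraph.dist_le q
        _ < r := by omega
    have hkey : key w < key u := by
      have h1 : key w < N * (T.coe.dist v₀ w + 1) := by
        rw [hkeydef]; dsimp only
        have := hrank w; rw [Nat.mul_add, Nat.mul_one]; omega
      have h2 : N * (T.coe.dist v₀ w + 1) ≤ N * r := Nat.mul_le_mul_left N (by omega)
      have h3 : N * r ≤ key u := by rw [hkeydef, hr]; exact Nat.le_add_right _ _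
      omega
    obtain ⟨j, hj⟩ := hf'surj w
    refine ⟨j, ?_, ?_⟩
    · exact hmono.mp (by rw [hj, ← hu]; exact hkey)
    · have : T.coe.Adj (f' j) (f' i) := by rw [hj, ← hu]; exact huw.symm
      simpa using this


/-- In a finite simple graph `G`, for integers `k ≥ 1` and `b ≥ 1`, the
number of subtrees `T` of `G` with exactly `k` vertices containing a fixed vertex `v`
and whose edge boundary in `G` has exactly `b` edges (edges of `G` with exactly one
endpoint in `V(T)`) is at most `k^{2(k-1)} · (k-1+b)^{k(k-1)}`. -/
theorem count_subtrees_with_boundary {V : Type*} [Fintype V] (G : SimpleGraph V)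
    (v : V) (k b : ℕ) (hk : 1 ≤ k) (hb : 1 ≤ b) :
    Nat.card {T : G.Subgraph //
        T.coe.IsTree ∧ T.verts.ncard = k ∧ v ∈ T.verts ∧
        Nat.card {e : Sym2 V // e ∈ G.edgeSet ∧
          ∃ u w : V, e = s(u, w) ∧ u ∈ T.verts ∧ w ∉ T.verts} = b}
      ≤ k ^ (2 * (k - 1)) * (k - 1 + b) ^ (k * (k - 1)) := by
  classical
  obtain ⟨m, rfl⟩ : ∃ m, k = m + 1 := ⟨k - 1, (Nat.succ_pred_eq_of_pos hk).symm⟩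
  set Sub := {T : G.Subgraph //
        T.coe.IsTree ∧ T.verts.ncard = m + 1 ∧ v ∈ T.verts ∧
        Nat.card {e : Sym2 V // e ∈ G.edgeSet ∧
          ∃ u w : V, e = s(u, w) ∧ u ∈ T.verts ∧ w ∉ T.verts} = b} with hSub
  set d := m + b with hd
  have hcount : Nat.card Sub ≤ Nat.card (Fin m → Fin (m + 1) × Fin d) := by
    have hdata : ∀ T : Sub, ∃ f : Fin (m + 1) → V, Function.Injective f ∧
        Set.range f = T.1.verts ∧ f 0 = v ∧
        ∀ i : Fin (m + 1), i ≠ 0 → ∃ j, j < i ∧ T.1.Adj (f j) (f i) := by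
      rintro ⟨T, htree, hcard, hv, hbd⟩
      haveI : Fintype T.verts := Fintype.ofFinite _
      have hc : Fintype.card T.verts = m + 1 := by
        rw [← Nat.card_eq_fintype_card, Nat.card_coe_set_eq, hcard]
      exact exists_good_enum T hc htree.isConnected hv
    choose f hfinj hfrange hf0 hpred using hdata
    choose J hJlt hJadj using fun (T : Sub) (i : Fin m) => hpred T i.succ (Fin.succ_ne_zero i)
    -- degree bound
    have hdeg : ∀ T : Sub, ∀ u ∈ T.1.verts, G.degree u ≤ m + b := by
      rintro ⟨T, htree, hcard, hvmem, hbd⟩ u hu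
      haveI : Fintype T.verts := Fintype.ofFinite _
      have hcard' : T.verts.ncard = m + 1 := hcard
      have hu' : u ∈ T.verts := hu
      have hbd' : Nat.card {e : Sym2 V // e ∈ G.edgeSet ∧
          ∃ u' w : V, e = s(u', w) ∧ u' ∈ T.verts ∧ w ∉ T.verts} = b := hbd
      have hsplit := Finset.card_filter_add_card_filter_not
        (s := G.neighborFinset u) (p := (· ∈ T.verts))
      have h1 : ((G.neighborFinset u).filter (· ∈ T.verts)).card ≤ m := by
        have hsubs : (G.neighborFinset u).filter (· ∈ T.verts) ⊆ T.verts.toFinset.erase u := by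
          intro w hw
          rw [Finset.mem_filter, SimpleGraph.mem_neighborFinset] at hw
          exact Finset.mem_erase.mpr ⟨(G.ne_of_adj hw.1).symm, Set.mem_toFinset.mpr hw.2⟩
        have h2 := Finset.card_le_card hsubs
        have h3 := Finset.card_erase_of_mem (Set.mem_toFinset.mpr hu')
        have h4 : T.verts.toFinset.card = m + 1 := by
          rw [← Set.ncard_eq_toFinset_card']
          exact hcard'
        omega
      have h2 : ((G.neighborFinset u).filter (fun w => ¬ w ∈ T.verts)).card ≤ b := by
        set outb := (G.neighborFinset u).filter (fun w => ¬ w ∈ T.verts) with houtb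
        set φ : outb → {e : Sym2 V // e ∈ G.edgeSet ∧
            ∃ u' w : V, e = s(u', w) ∧ u' ∈ T.verts ∧ w ∉ T.verts} := fun w =>
          ⟨s(u, w.1), by
            have hw := Finset.mem_filter.mp w.2
            rw [SimpleGraph.mem_neighborFinset] at hw
            exact ⟨hw.1, u, w.1, rfl, hu', hw.2⟩⟩ with hφ
        have hφinj : Function.Injective φ := by
          intro a c hac
          have h5 : s(u, a.1) = s(u, c.1) := congrArg Subtype.val hac
          exact Subtype.ext ((Sym2.congr_right).mp h5)
        have h6 := Nat.card_le_card_of_injective φ hφinj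
        rw [Nat.card_eq_finsetCard] at h6
        omega
      show (G.neighborFinset u).card ≤ m + b
      omega
    -- neighbor indexing
    set eV : V → ℕ := fun x => ((Fintype.equivFin V) x : ℕ) with heV
    have heVinj : Function.Injective eV :=
      fun a c h => (Fintype.equivFin V).injective (Fin.ext h)
    set idx : V → V → ℕ :=
      fun u x => ((G.neighborFinset u).filter (fun w => eV w < eV x)).card with hidx
    have hidxlt : ∀ u x, x ∈ G.neighborFinset u → idx u x < G.degree u := by
      intro u x hx
      have hsub : (G.neighborFinset u).filter (fun w => eV w < eV x) ⊆
          (G.neighborFinset u).erase x := by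
        intro w hw
        rw [Finset.mem_filter] at hw
        exact Finset.mem_erase.mpr ⟨fun h => by subst h; exact lt_irrefl _ hw.2, hw.1⟩
      have h1 := Finset.card_le_card hsub
      have h2 := Finset.card_erase_of_mem hx
      have h3 : 0 < (G.neighborFinset u).card := Finset.card_pos.mpr ⟨x, hx⟩
      simp only [hidx, SimpleGraph.degree] at *
      omega
    have hidxinj : ∀ u x y, x ∈ G.neighborFinset u → y ∈ G.neighborFinset u →
        idx u x = idx u y → x = y := by
      have haux : ∀ u x y, y ∈ G.neighborFinset u → eV y < eV x → idx u y < idx u x := by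
        intro u x y hy hlt
        apply Finset.card_lt_card
        rw [Finset.ssubset_iff_of_subset]
        · exact ⟨y, Finset.mem_filter.mpr ⟨hy, hlt⟩,
            fun hmem => absurd (Finset.mem_filter.mp hmem).2 (by omega)⟩
        · intro w hw
          rw [Finset.mem_filter] at hw ⊢
          exact ⟨hw.1, by omega⟩
      intro u x y hx hy hxy
      rcases lt_trichotomy (eV x) (eV y) with h | h | h
      · exact absurd hxy (Nat.ne_of_lt (haux u y x hx h))
      · exact heVinj h
      · exact absurd hxy (Nat.ne_of_gt (haux u x y hy h))
    -- the code
    have hmemnb : ∀ (T : Sub) (i : Fin m),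
        f T i.succ ∈ G.neighborFinset (f T (J T i)) :=
      fun T i => (G.mem_neighborFinset _ _).mpr (hJadj T i).adj_sub
    set code : Sub → (Fin m → Fin (m + 1) × Fin (m + b)) := fun T i =>
      (J T i, ⟨idx (f T (J T i)) (f T i.succ), by
        have h2 := hidxlt _ _ (hmemnb T i)
        have h3 := hdeg T (f T (J T i)) (by rw [← hfrange T]; exact ⟨J T i, rfl⟩)
        omega⟩) with hcode
    -- edge set identity
    have hecard : ∀ T : Sub, T.1.edgeSet.ncard = m := by
      rintro ⟨T, htree, hcard, hvmem, hbd⟩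
      haveI : Fintype T.verts := Fintype.ofFinite _
      haveI : Fintype T.coe.edgeSet := Fintype.ofFinite _
      have h1 := htree.card_edgeFinset
      have h2 : Fintype.card T.verts = m + 1 := by
        rw [← Nat.card_eq_fintype_card, Nat.card_coe_set_eq, hcard]
      have h3 : T.edgeSet = Sym2.map (↑) '' T.coe.edgeSet := (T.image_coe_edgeSet_coe).symm
      show T.edgeSet.ncard = m
      rw [h3, Set.ncard_image_of_injective _ (Sym2.map.injective Subtype.val_injective),
          Set.ncard_eq_toFinset_card']
      have h4 : T.coe.edgeSet.toFinset = T.coe.edgeFinset := rfl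
      rw [h4]
      omega
    have hedge : ∀ T : Sub,
        T.1.edgeSet = Set.range (fun i : Fin m => s(f T (J T i), f T i.succ)) := by
      intro T
      have hinj2 : Function.Injective (fun i : Fin m => s(f T (J T i), f T i.succ)) := by
        intro a c hac
        simp only [Sym2.eq, Sym2.rel_iff', Prod.mk.injEq, Prod.swap_prod_mk] at hac
        rcases hac with ⟨h1, h2⟩ | ⟨h1, h2⟩
        · exact Fin.succ_injective _ (hfinj T h2)
        · exfalso
          have e1 : J T a = c.succ := hfinj T h1
          have e2 : a.succ = J T c := hfinj T h2
          have l1 := hJlt T a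
          have l2 := hJlt T c
          rw [e1] at l1; rw [← e2] at l2
          exact absurd (l1.trans l2) (lt_irrefl _)
      have hsub : Set.range (fun i : Fin m => s(f T (J T i), f T i.succ)) ⊆ T.1.edgeSet := by
        rintro e ⟨i, rfl⟩
        exact (SimpleGraph.Subgraph.mem_edgeSet).mpr (hJadj T i)
      have hrangecard : (Set.range (fun i : Fin m => s(f T (J T i), f T i.succ))).ncard = m := by
        rw [← Set.image_univ, Set.ncard_image_of_injective _ hinj2, Set.ncard_univ,
          Nat.card_eq_fintype_card, Fintype.card_fin]
      exact (Set.eq_of_subset_of_ncard_le hsub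
        (by rw [hecard T, hrangecard]) (Set.toFinite _)).symm
    -- injectivity
    have hcodeinj : Function.Injective code := by
      intro T₁ T₂ hc
      have hfeq : ∀ n (h : n < m + 1), f T₁ ⟨n, h⟩ = f T₂ ⟨n, h⟩ := by
        intro n
        induction n using Nat.strong_induction_on with
        | _ n IH =>
          intro h
          rcases n with _ | t
          · have h0 : (⟨0, h⟩ : Fin (m + 1)) = 0 := rfl
            rw [h0, hf0 T₁, hf0 T₂]
          · have ht : t < m := by omega
            set i' : Fin m := ⟨t, ht⟩ with hi'
            have hci := congrFun hc i'
            have hJeq : J T₁ i' = J T₂ i' := congrArg Prod.fst hci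
            have hidxeq : idx (f T₁ (J T₁ i')) (f T₁ i'.succ)
                = idx (f T₂ (J T₂ i')) (f T₂ i'.succ) := by
              have h5 := congrArg Prod.snd hci
              exact congrArg Fin.val h5
            have hJval : (J T₁ i' : ℕ) < t + 1 := hJlt T₁ i'
            have hfj : f T₁ (J T₁ i') = f T₂ (J T₂ i') := by
              have h6 := IH (J T₁ i' : ℕ) hJval (J T₁ i').isLt
              rw [← hJeq]
              simpa using h6
            have hm1 := hmemnb T₁ i'
            have hm2 := hmemnb T₂ i'
            rw [← hfj] at hm2
            rw [← hfj] at hidxeq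
            have h7 : f T₁ i'.succ = f T₂ i'.succ := hidxinj _ _ _ hm1 hm2 hidxeq
            exact h7
      have hfe : f T₁ = f T₂ := funext fun i => by
        have := hfeq i.1 i.2; simpa using this
      have hJe : J T₁ = J T₂ := funext fun i => congrArg Prod.fst (congrFun hc i)
      have hverts : T₁.1.verts = T₂.1.verts := by
        rw [← hfrange T₁, ← hfrange T₂, hfe]
      have hE : T₁.1.edgeSet = T₂.1.edgeSet := by
        rw [hedge T₁, hedge T₂, hfe, hJe]
      refine Subtype.ext (SimpleGraph.Subgraph.ext hverts ?_)
      funext x y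
      have := Set.ext_iff.mp hE s(x, y)
      rw [SimpleGraph.Subgraph.mem_edgeSet, SimpleGraph.Subgraph.mem_edgeSet] at this
      exact propext this
    exact Nat.card_le_card_of_injective code hcodeinj

  have hcard2 : Nat.card (Fin m → Fin (m + 1) × Fin d) = ((m + 1) * d) ^ m := by
    rw [Nat.card_eq_fintype_card, Fintype.card_fun]
    simp
  calc Nat.card Sub ≤ ((m + 1) * d) ^ m := hcard2 ▸ hcount
    _ = (m + 1) ^ m * d ^ m := mul_pow _ _ _
    _ ≤ (m + 1) ^ (2 * (m + 1 - 1)) * (m + 1 - 1 + b) ^ ((m + 1) * (m + 1 - 1)) := by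
        simp only [Nat.add_sub_cancel, hd]
        exact Nat.mul_le_mul
          (Nat.pow_le_pow_right (by omega) (by omega))
          (Nat.pow_le_pow_right (by omega) (Nat.le_mul_of_pos_left m (by omega)))
end
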